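/- Let G be a group and H a finitely generated G-group that is G-discriminated by G. Then the Krull dimension Kdim_G(H) of H is equal to the projective dimension pd_G(H) of H. -/

import Mathlib

/-!
STATEMENT 5 (Proposition): Let `G` be a group and `H` a finitely generated `G`-group
that is `G`-discriminated by `G`. Then the Krull dimension `Kdim_G(H)` equals the
projective dimension `pd_G(H)`. The `G`-group structure is given by a monomorphism
`ι : G →* H`; `H` finitely generated as a `G`-group means `H` is generated by the image
of `G` together with a finite set.
-/


/-- `H/N` (the quotient of the `G`-group `H`, with distinguished copy of `G` given by
`ι : G →* H`, by the normal subgroup `N`) is `G`-discriminated by `G`: for every finite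
subset there is a `G`-homomorphism to `G` (i.e. one fixing `G` pointwise and killing `N`)
injective on it (modulo `N`). -/
def DiscriminatesQuot {G H : Type*} [Group G] [Group H] (ι : G →* H) (N : Subgroup H) : Prop :=
  ∀ K : Finset H, ∃ φ : H →* G, φ.comp ι = MonoidHom.id G ∧ N ≤ φ.ker ∧
    ∀ x ∈ K, ∀ y ∈ K, φ x = φ y → x⁻¹ * y ∈ N

/-- A prime ideal of the `G`-group `H`: a normal subgroup meeting the distinguished copy
of `G` trivially and such that `H/N` is `G`-discriminated by `G`. -/
def IsPrimeIdeal {G H : Type*} [Group G] [Group H] (ι : G →* H) (N : Subgroup H) : Prop :=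
  N.Normal ∧ (∀ g : G, ι g ∈ N → g = 1) ∧ DiscriminatesQuot ι N

/-- The Krull dimension of the `G`-group `H`: the supremum of lengths of chains of
distinct prime ideals. -/
noncomputable def KdimG {G H : Type*} [Group G] [Group H] (ι : G →* H) : ℕ∞ :=
  ⨆ (k : ℕ) (_ : ∃ p : Fin (k + 1) → Subgroup H, StrictMono p ∧ ∀ i, IsPrimeIdeal ι (p i)),
    (k : ℕ∞)

/-- The projective dimension of the `G`-group `H` (which is `G`-discriminated by `G`):
the supremum of lengths `k` of chains `H = H_0 → H_1 → ... → H_k = G` of proper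
`G`-epimorphisms of `G`-groups `G`-discriminated by `G`; such a chain is encoded by the
strictly increasing chain of kernels `N i ≤ H`, with `H/N k ≅ G` as `G`-groups. -/
noncomputable def pdG {G H : Type*} [Group G] [Group H] (ι : G →* H) : ℕ∞ :=
  ⨆ (k : ℕ) (_ : ∃ N : Fin (k + 1) → Subgroup H, StrictMono N ∧ N 0 = ⊥ ∧
      (∀ i, (N i).Normal ∧ (∀ g : G, ι g ∈ N i → g = 1) ∧ DiscriminatesQuot ι (N i)) ∧
      (∀ h : H, ∃ g : G, (ι g)⁻¹ * h ∈ N (Fin.last k))), (k : ℕ∞)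

/-- `A` discriminates `B`: every finite subset of `B` is mapped injectively into `A`
by some homomorphism. -/
def Discriminates (A : Type*) [Group A] (B : Type*) [Group B] : Prop :=
  ∀ K : Finset B, ∃ φ : B →* A, Set.InjOn φ ↑K

/-- The projective dimension `pd(H)` of a group `H`: the supremum of lengths `k` of chains
`H = H_1 → H_2 → ... → H_{k+1}` of proper epimorphisms in which each `H_i` and `H`
mutually discriminate each other; such a chain is encoded by the strictly increasing
chain of kernels `N i`. -/
noncomputable def projDim (H : Type*) [Group H] : ℕ∞ :=
  ⨆ (k : ℕ) (_ : ∃ (N : Fin (k + 1) → Subgroup H) (hN : ∀ i, (N i).Normal),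
      StrictMono N ∧ N 0 = ⊥ ∧
      ∀ i, @Discriminates H _ (H ⧸ N i) (@QuotientGroup.Quotient.group H _ (N i) (hN i)) ∧
        @Discriminates (H ⧸ N i) (@QuotientGroup.Quotient.group H _ (N i) (hN i)) H _),
    (k : ℕ∞)

theorem stmt5 {G H : Type} [Group G] [Group H] (ι : G →* H) (hinj : Function.Injective ι)
    (hfg : ∃ T : Finset H, Subgroup.closure (Set.range ι ∪ ↑T) = ⊤)
    (hdisc : DiscriminatesQuot ι ⊥) :
    KdimG ι = pdG ι := by
  have hbot : IsPrimeIdeal ι (⊥ : Subgroup H) :=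
    ⟨inferInstance, fun g hg => hinj (by simpa using hg), hdisc⟩
  refine le_antisymm (iSup_le fun k => iSup_le fun hk => ?_)
    (iSup_le fun k => iSup_le fun hk => ?_)
  · obtain ⟨p, hmono, hprime⟩ := hk
    match k with
    | 0 => exact zero_le
    | (m+1) =>
      obtain ⟨φ, hφι, hφker, -⟩ := (hprime (Fin.last (m+1))).2.2 ∅
      have hφι' : ∀ g, φ (ι g) = g := fun g => DFunLike.congr_fun hφι g
      have hMprime : IsPrimeIdeal ι φ.ker := by
        refine ⟨φ.normal_ker, fun g hg => ?_,
          fun K => ⟨φ, hφι, le_rfl, fun x _ y _ hxy => ?_⟩⟩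
        · rw [MonoidHom.mem_ker] at hg
          have := hφι' g
          rw [hg] at this; exact this.symm
        · simp [MonoidHom.mem_ker, hxy]
      set N : Fin (m+2) → Subgroup H := fun i =>
        if i = Fin.last (m+1) then φ.ker else if i = 0 then ⊥ else p i with hN
      have h0last : (0 : Fin (m+2)) ≠ Fin.last (m+1) := by
        simp [Fin.ext_iff]
      have hlt : ∀ i : Fin (m+2), i ≠ Fin.last (m+1) → p i < φ.ker := fun i hi =>
        lt_of_lt_of_le (hmono ((Fin.le_last i).lt_of_ne hi)) hφker
      have hsm : StrictMono N := by
        intro i j hij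
        have hine : i ≠ Fin.last (m+1) := by
          intro h; subst h; exact absurd (hij.trans_le (Fin.le_last j)) (lt_irrefl _)
        by_cases hj : j = Fin.last (m+1)
        · subst hj
          by_cases hi : i = 0
          · subst hi
            simp only [hN, if_pos rfl, if_neg h0last, if_pos rfl]
            exact lt_of_le_of_lt bot_le (hlt 0 h0last)
          · simp only [hN, if_pos rfl, if_neg hine, if_neg hi]
            exact hlt i hine
        · have hjne0 : j ≠ 0 := by
            intro h; subst h
            exact absurd hij (by simp [Fin.lt_iff_val_lt_val])
          by_cases hi : i = 0
          · subst hi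
            simp only [hN, if_neg hj, if_neg h0last, if_pos rfl, if_neg hjne0]
            exact lt_of_le_of_lt bot_le (hmono hij)
          · simp only [hN, if_neg hj, if_neg hine, if_neg hi, if_neg hjne0]
            exact hmono hij
      refine le_iSup_of_le (m+1) (le_iSup_of_le ⟨N, hsm, ?_, ?_, ?_⟩ le_rfl)
      · simp [hN, h0last]
      · intro i
        by_cases hi : i = Fin.last (m+1)
        · subst hi; simpa [hN, IsPrimeIdeal] using hMprime
        · by_cases hi0 : i = 0
          · subst hi0; simpa [hN, h0last, IsPrimeIdeal] using hbot
          · simpa [hN, hi, hi0, IsPrimeIdeal] using hprime i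
      · intro h
        refine ⟨φ h, ?_⟩
        simp [hN, MonoidHom.mem_ker, hφι']
  · obtain ⟨N, hmono, -, hprime, -⟩ := hk
    exact le_iSup_of_le k (le_iSup_of_le ⟨N, hmono, fun i => hprime i⟩ le_rfl)
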